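/- arXiv:2302.10092 — 6 statements merged into one kernel-verified Lean document; each statement's English description precedes it below -/
import Mathlib

section
/- Let (Ω, P) be a probability space and θ > 0. Let (α_i)_{i∈ℕ} and (σ_i)_{i∈ℕ} be real-valued random variables such that the combined family {α_i} ∪ {σ_i} is mutually independent, the α_i are identically distributed, and the σ_i are identically distributed. Suppose exp(θ·α_0) and exp(−θ·σ_0) are integrable, and set a := E[exp(θ·α_0)], b := E[exp(−θ·σ_0)], with a·b < 1. Then for all natural numbers t and w, P(∃ u ∈ {0,…,t}, ∑_{i=u}^{t−1} α_i ≥ ∑_{i=u}^{t+w−1} σ_i) ≤ b^w / (1 − a·b). -/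
open MeasureTheory ProbabilityTheory Real

/-- Theorem 2 of the paper (UB-SDVP): with i.i.d. per-slot arrival increments `α i`
and i.i.d. per-slot service increments `σ i`, the whole family being mutually
independent, per-slot arrival MGF `a` and service inverse-MGF `b` at `θ` with
stability condition `a * b < 1`, the probability that the cumulative arrivals
`∑_{i=u}^{t-1} α i` exceed the cumulative service `∑_{i=u}^{t+w-1} σ i` for some
`u ≤ t` is at most `b ^ w / (1 - a * b)`. -/
theorem stmt_3 {Ω : Type*} [MeasurableSpace Ω] (P : Measure Ω) [IsProbabilityMeasure P]
    (θ : ℝ) (hθ : 0 < θ) (α σ : ℕ → Ω → ℝ)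
    (hmα : ∀ i, Measurable (α i)) (hmσ : ∀ i, Measurable (σ i))
    (hindep : iIndepFun (Sum.elim α σ) P)
    (hidα : ∀ i, IdentDistrib (α i) (α 0) P P)
    (hidσ : ∀ i, IdentDistrib (σ i) (σ 0) P P)
    (hinta : Integrable (fun ω => Real.exp (θ * α 0 ω)) P)
    (hintb : Integrable (fun ω => Real.exp (-θ * σ 0 ω)) P)
    (a b : ℝ)
    (ha : a = ∫ ω, Real.exp (θ * α 0 ω) ∂P)
    (hb : b = ∫ ω, Real.exp (-θ * σ 0 ω) ∂P)
    (hab : a * b < 1) (t w : ℕ) :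
    P {ω | ∃ u ≤ t, ∑ i ∈ Finset.Ico u t, α i ω ≥ ∑ i ∈ Finset.Ico u (t + w), σ i ω}
      ≤ ENNReal.ofReal (b ^ w / (1 - a * b)) := by
  classical
  -- The family X : arrival increments and negated service increments
  set X : ℕ ⊕ ℕ → Ω → ℝ := Sum.elim α (fun i ω => -σ i ω) with hXdef
  have hXmeas : ∀ j, Measurable (X j) := by
    rintro (i | i)
    · exact hmα i
    · exact (hmσ i).neg
  have hXindep : iIndepFun X P := by
    have h := hindep.comp (fun j => Sum.elim (fun _ : ℕ => (id : ℝ → ℝ))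
      (fun _ : ℕ => (fun x : ℝ => -x)) j)
      (by rintro (i | i); exacts [measurable_id, measurable_neg])
    convert h using 1
    funext j
    rcases j with i | i <;> rfl
  -- integrability and mgf values
  have hintA : ∀ i, Integrable (fun ω => Real.exp (θ * α i ω)) P := fun i =>
    ((hidα i).comp ((measurable_id.const_mul θ).exp : Measurable fun x : ℝ => Real.exp (θ * x))).integrable_iff.mpr
      hinta
  have hintB : ∀ i, Integrable (fun ω => Real.exp (θ * (-σ i ω))) P := by
    intro i
    have := ((hidσ i).comp
      ((measurable_id.const_mul (-θ)).exp : Measurable fun x : ℝ => Real.exp (-θ * x))).integrable_iff.mpr hintb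
    simpa [neg_mul, mul_neg, Function.comp_def] using this
  have hintX : ∀ j, Integrable (fun ω => Real.exp (θ * X j ω)) P := by
    rintro (i | i)
    · exact hintA i
    · exact hintB i
  have hmgfa : ∀ i, mgf (α i) P θ = a := by
    intro i
    rw [ha]
    exact ((hidα i).comp
      ((measurable_id.const_mul θ).exp : Measurable fun x : ℝ => Real.exp (θ * x))).integral_eq
  have hmgfb : ∀ i, mgf (X (Sum.inr i)) P θ = b := by
    intro i
    rw [hb]
    have h := ((hidσ i).comp
      ((measurable_id.const_mul (-θ)).exp : Measurable fun x : ℝ => Real.exp (-θ * x))).integral_eq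
    simp only [mgf, hXdef, Sum.elim_inr]
    simpa [mul_neg, neg_mul] using h
  have hapos : 0 < a := by
    have := mgf_pos (X := α 0) (μ := P) (t := θ) hinta
    rwa [hmgfa 0] at this
  have hbpos : 0 < b := by
    have := mgf_pos (X := X (Sum.inr 0)) (μ := P) (t := θ) (hintB 0)
    rwa [hmgfb 0] at this
  have habnn : 0 ≤ a * b := le_of_lt (mul_pos hapos hbpos)
  have h1ab : 0 < 1 - a * b := by linarith
  -- per-u event and Chernoff bound
  set E : ℕ → Set Ω := fun u =>
    {ω | ∑ i ∈ Finset.Ico u t, α i ω ≥ ∑ i ∈ Finset.Ico u (t + w), σ i ω} with hEdef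
  set s : ℕ → Finset (ℕ ⊕ ℕ) := fun u => (Finset.Ico u t).disjSum (Finset.Ico u (t + w))
    with hsdef
  have hEeq : ∀ u, E u = {ω | (0 : ℝ) ≤ (∑ j ∈ s u, X j) ω} := by
    intro u
    ext ω
    simp only [hEdef, hsdef, Set.mem_setOf_eq, Finset.sum_apply, Finset.sum_disjSum, hXdef,
      Sum.elim_inl, Sum.elim_inr, ge_iff_le]
    rw [Finset.sum_neg_distrib]
    constructor
    · intro h; linarith
    · intro h; linarith
  have hbound : ∀ u ∈ Finset.range (t + 1),
      P (E u) ≤ ENNReal.ofReal ((a * b) ^ (t - u) * b ^ w) := by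
    intro u hu
    have hut : u ≤ t := Nat.lt_succ_iff.mp (Finset.mem_range.mp hu)
    have hcher := measure_ge_le_exp_mul_mgf (μ := P) (X := ∑ j ∈ s u, X j) (t := θ) 0
      hθ.le (hXindep.integrable_exp_mul_sum hXmeas (fun j _ => hintX j))
    rw [iIndepFun.mgf_sum hXindep hXmeas] at hcher
    have hprod : (∏ j ∈ s u, mgf (X j) P θ) = (a * b) ^ (t - u) * b ^ w := by
      simp only [hsdef]
      rw [Finset.prod_disjSum]
      have h1 : (∏ x ∈ Finset.Ico u t, mgf (X (Sum.inl x)) P θ) = a ^ (t - u) := by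
        have hc : ∀ i ∈ Finset.Ico u t, mgf (X (Sum.inl i)) P θ = a := fun i _ => hmgfa i
        rw [Finset.prod_congr rfl hc, Finset.prod_const, Nat.card_Ico]
      have h2 : (∏ x ∈ Finset.Ico u (t + w), mgf (X (Sum.inr x)) P θ) = b ^ (t + w - u) := by
        rw [Finset.prod_congr rfl (fun i _ => hmgfb i), Finset.prod_const, Nat.card_Ico]
      rw [h1, h2]
      have : t + w - u = (t - u) + w := by omega
      rw [this, pow_add, mul_pow]
      ring
    rw [hprod] at hcher
    simp only [mul_zero, neg_zero, Real.exp_zero, one_mul] at hcher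
    rw [hEeq u]
    rw [← ENNReal.ofReal_toReal (measure_ne_top P _)]
    exact ENNReal.ofReal_le_ofReal hcher
  -- union bound
  have hsub : {ω | ∃ u ≤ t, ∑ i ∈ Finset.Ico u t, α i ω
      ≥ ∑ i ∈ Finset.Ico u (t + w), σ i ω} ⊆ ⋃ u ∈ Finset.range (t + 1), E u := by
    intro ω hω
    obtain ⟨u, hu, hω⟩ := hω
    exact Set.mem_biUnion (Finset.mem_range.mpr (Nat.lt_succ_of_le hu)) hω
  calc P {ω | ∃ u ≤ t, ∑ i ∈ Finset.Ico u t, α i ω ≥ ∑ i ∈ Finset.Ico u (t + w), σ i ω}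
      ≤ P (⋃ u ∈ Finset.range (t + 1), E u) := measure_mono hsub
    _ ≤ ∑ u ∈ Finset.range (t + 1), P (E u) := measure_biUnion_finset_le _ _
    _ ≤ ∑ u ∈ Finset.range (t + 1), ENNReal.ofReal ((a * b) ^ (t - u) * b ^ w) :=
        Finset.sum_le_sum hbound
    _ = ENNReal.ofReal (∑ u ∈ Finset.range (t + 1), (a * b) ^ (t - u) * b ^ w) := by
        rw [ENNReal.ofReal_sum_of_nonneg (fun u _ => by positivity)]
    _ ≤ ENNReal.ofReal (b ^ w / (1 - a * b)) := by
        apply ENNReal.ofReal_le_ofReal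
        have hre : ∑ u ∈ Finset.range (t + 1), (a * b) ^ (t - u) * b ^ w
            = (∑ k ∈ Finset.range (t + 1), (a * b) ^ k) * b ^ w := by
          rw [← Finset.sum_mul]
          congr 1
          rw [← Finset.sum_range_reflect (fun k => (a * b) ^ k) (t + 1)]
          apply Finset.sum_congr rfl
          intro u hu
          congr 1 <;> omega
        rw [hre]
        have hgeom : ∑ k ∈ Finset.range (t + 1), (a * b) ^ k ≤ 1 / (1 - a * b) := by
          rw [geom_sum_eq (ne_of_lt hab)]
          have h2 : ((a * b) ^ (t + 1) - 1) / (a * b - 1)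
              = (1 - (a * b) ^ (t + 1)) / (1 - a * b) := by
            rw [← neg_div_neg_eq]; ring_nf
          rw [h2]
          exact div_le_div₀ zero_le_one (by nlinarith [pow_nonneg habnn (t + 1)]) h1ab le_rfl
        calc (∑ k ∈ Finset.range (t + 1), (a * b) ^ k) * b ^ w
            ≤ (1 / (1 - a * b)) * b ^ w := by
              apply mul_le_mul_of_nonneg_right hgeom (by positivity)
          _ = b ^ w / (1 - a * b) := by ring
end

section
/- Fix a real constant c ≥ 0. The function γ ↦ (1 + γ) · (ln(1 + γ) − c) / √((1 + γ)² − 1) is strictly increasing on the interval (0, ∞). -/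
private lemma aux_hasDerivAt (c γ : ℝ) (hγ : 0 < γ) :
    HasDerivAt (fun γ : ℝ => (1 + γ) * (Real.log (1 + γ) - c) / Real.sqrt ((1 + γ) ^ 2 - 1))
      ((((Real.log (1 + γ) - c) + 1) * Real.sqrt ((1 + γ) ^ 2 - 1)
          - (1 + γ) * (Real.log (1 + γ) - c) * ((1 + γ) / Real.sqrt ((1 + γ) ^ 2 - 1)))
        / (Real.sqrt ((1 + γ) ^ 2 - 1)) ^ 2) γ := by
  have hu : (0:ℝ) < 1 + γ := by linarith
  have hs : (0:ℝ) < (1 + γ) ^ 2 - 1 := by nlinarith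
  have hss : (0:ℝ) < Real.sqrt ((1 + γ) ^ 2 - 1) := Real.sqrt_pos.mpr hs
  have h1 : HasDerivAt (fun γ : ℝ => 1 + γ) 1 γ := by
    simpa using (hasDerivAt_id γ).const_add 1
  have hlog : HasDerivAt (fun γ : ℝ => Real.log (1 + γ)) (1 / (1 + γ)) γ := by
    simpa [Function.comp_def] using (Real.hasDerivAt_log hu.ne').comp γ h1
  have hN : HasDerivAt (fun γ : ℝ => (1 + γ) * (Real.log (1 + γ) - c))
      ((Real.log (1 + γ) - c) + 1) γ := by
    have h := h1.fun_mul (hlog.sub_const c)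
    refine h.congr_deriv ?_
    field_simp
  have hin : HasDerivAt (fun γ : ℝ => (1 + γ) ^ 2 - 1) (2 * (1 + γ)) γ := by
    simpa [mul_comm] using ((h1.pow 2).sub_const 1)
  have hD : HasDerivAt (fun γ : ℝ => Real.sqrt ((1 + γ) ^ 2 - 1))
      ((1 + γ) / Real.sqrt ((1 + γ) ^ 2 - 1)) γ := by
    have h := (Real.hasDerivAt_sqrt hs.ne').comp γ hin
    simp only [Function.comp_def] at h
    refine h.congr_deriv ?_
    field_simp
  exact hN.div hD hss.ne'

/-- Core monotonicity claim in the proof of Theorem 5: for a constant `c ≥ 0`, the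
function `γ ↦ (1+γ)(ln(1+γ) - c)/√((1+γ)² - 1)` is strictly increasing on `(0, ∞)`. -/
theorem stmt_5 (c : ℝ) (hc : 0 ≤ c) :
    StrictMonoOn (fun γ : ℝ => (1 + γ) * (Real.log (1 + γ) - c) / Real.sqrt ((1 + γ) ^ 2 - 1))
      (Set.Ioi 0) := by
  have hcont : ContinuousOn
      (fun γ : ℝ => (1 + γ) * (Real.log (1 + γ) - c) / Real.sqrt ((1 + γ) ^ 2 - 1))
      (Set.Ioi 0) := by
    intro γ hγ
    have hγ' : (0:ℝ) < γ := hγ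
    exact ((aux_hasDerivAt c γ hγ').continuousAt).continuousWithinAt
  apply strictMonoOn_of_deriv_pos (convex_Ioi 0) hcont
  intro γ hγ
  rw [interior_Ioi] at hγ
  have hγ' : (0:ℝ) < γ := hγ
  rw [(aux_hasDerivAt c γ hγ').deriv]
  have hu : (0:ℝ) < 1 + γ := by linarith
  have hs : (0:ℝ) < (1 + γ) ^ 2 - 1 := by nlinarith
  have hss : (0:ℝ) < Real.sqrt ((1 + γ) ^ 2 - 1) := Real.sqrt_pos.mpr hs
  set L := Real.log (1 + γ) - c with hL
  have hnum : 0 < (L + 1) * Real.sqrt ((1 + γ) ^ 2 - 1)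
      - (1 + γ) * L * ((1 + γ) / Real.sqrt ((1 + γ) ^ 2 - 1)) := by
    have hLlt : L < (1 + γ) ^ 2 - 1 := by
      have hlog : Real.log (1 + γ) < (1 + γ) - 1 :=
        Real.log_lt_sub_one_of_pos hu (by linarith)
      have : Real.log (1 + γ) < (1 + γ) ^ 2 - 1 := by nlinarith
      simp only [hL]; linarith
    have hmul : ((L + 1) * Real.sqrt ((1 + γ) ^ 2 - 1)
        - (1 + γ) * L * ((1 + γ) / Real.sqrt ((1 + γ) ^ 2 - 1)))
        * Real.sqrt ((1 + γ) ^ 2 - 1) = ((1 + γ) ^ 2 - 1) - L := by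
      have hsq : Real.sqrt ((1 + γ) ^ 2 - 1) * Real.sqrt ((1 + γ) ^ 2 - 1)
          = (1 + γ) ^ 2 - 1 := Real.mul_self_sqrt hs.le
      field_simp
      nlinarith [hsq]
    have hpos : 0 < ((L + 1) * Real.sqrt ((1 + γ) ^ 2 - 1)
        - (1 + γ) * L * ((1 + γ) / Real.sqrt ((1 + γ) ^ 2 - 1)))
        * Real.sqrt ((1 + γ) ^ 2 - 1) := by rw [hmul]; linarith
    nlinarith [hpos, hss]
  positivity
end

section
/- Let Q(x) = ∫_x^∞ (1/√(2π)) e^{−t²/2} dt denote the Gaussian Q-function, let n > 0 be a real number (the blocklength) and r ≥ 0 a real number (the target rate). Then the decoding error probability function ε(γ) = Q( √n · (ln(1+γ) − r·ln 2) / √(1 − (1+γ)^{−2}) ) is strictly decreasing on the interval (0, ∞). -/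
open Real MeasureTheory Set

private lemma gauss_integrable : Integrable (fun t : ℝ => (Real.sqrt (2 * Real.pi))⁻¹ * Real.exp (-t ^ 2 / 2)) := by
  have h := (integrable_exp_neg_mul_sq (by norm_num : (0:ℝ) < 1/2)).const_mul (Real.sqrt (2 * Real.pi))⁻¹
  convert h using 2 with t
  ring_nf

private lemma Q_strictAnti (Q : ℝ → ℝ)
    (hQ : ∀ x, Q x = ∫ t in Set.Ioi x, (Real.sqrt (2 * Real.pi))⁻¹ * Real.exp (-t ^ 2 / 2)) :
    StrictAnti Q := by
  intro x y hxy
  rw [hQ x, hQ y]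
  set g : ℝ → ℝ := fun t => (Real.sqrt (2 * Real.pi))⁻¹ * Real.exp (-t ^ 2 / 2) with hg
  have hgi := gauss_integrable
  have hsplit : (∫ t in Set.Ioi x, g t) = (∫ t in Set.Ioc x y, g t) + ∫ t in Set.Ioi y, g t := by
    rw [← setIntegral_union (Set.Ioc_disjoint_Ioi le_rfl) measurableSet_Ioi
      hgi.integrableOn hgi.integrableOn, Set.Ioc_union_Ioi_eq_Ioi hxy.le]
  rw [hsplit]
  have hpos : 0 < ∫ t in Set.Ioc x y, g t := by
    rw [← intervalIntegral.integral_of_le hxy.le]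
    refine intervalIntegral.intervalIntegral_pos_of_pos_on hgi.intervalIntegrable (fun t _ => ?_) hxy
    positivity
  linarith

-- inner function strict mono
private lemma inner_strictMono (c : ℝ) (hc : 0 ≤ c) :
    StrictMonoOn (fun x : ℝ => x * (Real.log x - c) / Real.sqrt (x ^ 2 - 1)) (Set.Ioi 1) := by
  have hint : interior (Set.Ioi (1:ℝ)) = Set.Ioi 1 := interior_Ioi
  refine StrictMonoOn.mono ?_ (le_refl _)
  apply strictMonoOn_of_deriv_pos (convex_Ioi 1)
  · -- continuity on Ioi 1
    apply ContinuousOn.div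
    · exact (continuousOn_id.mul ((Real.continuousOn_log.mono (fun x hx => ne_of_gt (lt_trans one_pos hx))).sub continuousOn_const))
    · exact (continuousOn_id.pow 2 |>.sub continuousOn_const).sqrt
    · intro x hx
      have h1 : (1:ℝ) < x := hx
      have : 0 < x ^ 2 - 1 := by nlinarith
      exact ne_of_gt (Real.sqrt_pos.mpr this)
  · intro x hx
    rw [hint] at hx
    have h1 : (1:ℝ) < x := hx
    have hx0 : 0 < x := lt_trans one_pos h1
    have hs2 : 0 < x ^ 2 - 1 := by nlinarith
    have hs : 0 < Real.sqrt (x ^ 2 - 1) := Real.sqrt_pos.mpr hs2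
    set s := Real.sqrt (x ^ 2 - 1) with hsdef
    have hss : s ^ 2 = x ^ 2 - 1 := Real.sq_sqrt hs2.le
    -- derivatives
    have hu : HasDerivAt (fun x : ℝ => x * (Real.log x - c)) ((Real.log x - c) + x * (1/x)) x := by
      have := (hasDerivAt_id' x).mul ((Real.hasDerivAt_log (ne_of_gt hx0)).sub_const c)
      exact this.congr_deriv (by simp [one_div])
    have hv0 : HasDerivAt (fun x : ℝ => x ^ 2 - 1) (2 * x) x := by
      simpa using ((hasDerivAt_pow 2 x).sub_const 1)
    have hv : HasDerivAt (fun x : ℝ => Real.sqrt (x ^ 2 - 1)) (2 * x / (2 * s)) x :=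
      hv0.sqrt (ne_of_gt hs2)
    have hd : HasDerivAt (fun x : ℝ => x * (Real.log x - c) / Real.sqrt (x ^ 2 - 1))
        ((((Real.log x - c) + x * (1/x)) * s - x * (Real.log x - c) * (2 * x / (2 * s))) / s ^ 2) x :=
      hu.div hv (ne_of_gt hs)
    rw [hd.deriv]
    have hnum : 0 < ((Real.log x - c) + x * (1/x)) * s - x * (Real.log x - c) * (2 * x / (2 * s)) := by
      have hlog : Real.log x < x - 1 := Real.log_lt_sub_one_of_pos hx0 (ne_of_gt h1)
      have key : 0 < ((Real.log x - c) + x * (1/x)) * s ^ 2 - x * (Real.log x - c) * x := by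
        rw [hss]
        field_simp
        nlinarith
      have : ((Real.log x - c) + x * (1/x)) * s - x * (Real.log x - c) * (2 * x / (2 * s))
          = (((Real.log x - c) + x * (1/x)) * s ^ 2 - x * (Real.log x - c) * x) / s := by
        field_simp
      rw [this]
      positivity
    positivity

/-- Theorem 5 of the paper: with `Q` the Gaussian Q-function, blocklength `n > 0` and
target rate `r ≥ 0`, the finite-blocklength decoding error probability
`ε(γ) = Q(√n (ln(1+γ) - r ln 2)/√(1 - (1+γ)⁻²))` is strictly decreasing on `(0, ∞)`. -/
theorem stmt_6 (Q : ℝ → ℝ)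
    (hQ : ∀ x, Q x = ∫ t in Set.Ioi x, (Real.sqrt (2 * Real.pi))⁻¹ * Real.exp (-t ^ 2 / 2))
    (n r : ℝ) (hn : 0 < n) (hr : 0 ≤ r) :
    StrictAntiOn (fun γ : ℝ =>
        Q (Real.sqrt n * (Real.log (1 + γ) - r * Real.log 2) /
            Real.sqrt (1 - (1 + γ)⁻¹ ^ 2)))
      (Set.Ioi 0) := by
  have hc : 0 ≤ r * Real.log 2 := mul_nonneg hr (Real.log_nonneg one_le_two)
  have hmono := inner_strictMono (r * Real.log 2) hc
  have hQa := Q_strictAnti Q hQ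
  have hkey : ∀ γ : ℝ, γ ∈ Set.Ioi (0:ℝ) →
      Real.sqrt n * (Real.log (1 + γ) - r * Real.log 2) / Real.sqrt (1 - (1 + γ)⁻¹ ^ 2)
        = Real.sqrt n * ((1 + γ) * (Real.log (1 + γ) - r * Real.log 2) /
            Real.sqrt ((1 + γ) ^ 2 - 1)) := by
    intro γ hγ
    have hγ0 : (0:ℝ) < γ := hγ
    have hx0 : (0:ℝ) < 1 + γ := by linarith
    have h1 : (1:ℝ) < 1 + γ := by linarith
    have hs2 : (0:ℝ) ≤ (1 + γ) ^ 2 - 1 := by nlinarith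
    have hden : 1 - (1 + γ)⁻¹ ^ 2 = ((1 + γ) ^ 2 - 1) / (1 + γ) ^ 2 := by
      field_simp
    rw [hden, Real.sqrt_div hs2, Real.sqrt_sq hx0.le]
    have hsqne : Real.sqrt ((1 + γ) ^ 2 - 1) ≠ 0 := by
      have : (0:ℝ) < (1 + γ) ^ 2 - 1 := by nlinarith
      exact ne_of_gt (Real.sqrt_pos.mpr this)
    field_simp
  intro a ha b hb hab
  simp only [hkey a ha, hkey b hb]
  apply hQa
  have h1a : (1:ℝ) + a ∈ Set.Ioi (1:ℝ) := by simp; exact ha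
  have h1b : (1:ℝ) + b ∈ Set.Ioi (1:ℝ) := by simp; exact hb
  have := hmono h1a h1b (by linarith)
  have hn' : 0 < Real.sqrt n := Real.sqrt_pos.mpr hn
  exact mul_lt_mul_of_pos_left this hn'
end

section
/- The function g̃(γ) = ln(1 + γ) / (γ·(γ + 2)) is strictly decreasing on the interval (0, ∞). -/
/-- Auxiliary claim in the proof of Theorem 5: `g̃(γ) = ln(1+γ)/(γ(γ+2))` is strictly
decreasing on `(0, ∞)`. -/
theorem stmt_7 :
    StrictAntiOn (fun γ : ℝ => Real.log (1 + γ) / (γ * (γ + 2))) (Set.Ioi 0) := by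
  have hderiv : ∀ x ∈ interior (Set.Ioi (0:ℝ)),
      deriv (fun γ : ℝ => Real.log (1 + γ) / (γ * (γ + 2))) x < 0 := by
    intro x hx
    rw [interior_Ioi] at hx
    have hx0 : (0:ℝ) < x := hx
    have h1x : (0:ℝ) < 1 + x := by linarith
    have hden : x * (x + 2) ≠ 0 := by positivity
    have hd1 : HasDerivAt (fun γ : ℝ => Real.log (1 + γ)) (1 / (1 + x)) x := by
      have h := (Real.hasDerivAt_log (ne_of_gt h1x)).comp x
        ((hasDerivAt_const x (1:ℝ)).add (hasDerivAt_id x))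
      simpa [one_div, Function.comp_def] using h
    have hd2 : HasDerivAt (fun γ : ℝ => γ * (γ + 2)) (1 * (x + 2) + x * 1) x :=
      (hasDerivAt_id x).mul ((hasDerivAt_id x).add_const 2)
    have hd := hd1.div hd2 hden
    rw [show (fun γ : ℝ => Real.log (1 + γ) / (γ * (γ + 2))) = ((fun γ : ℝ => Real.log (1 + γ)) / fun γ => γ * (γ + 2)) from rfl, hd.deriv]
    apply div_neg_of_neg_of_pos
    · -- key inequality: 1 - (1+x)⁻² < 2 log(1+x)
      have hne : ((1 + x)^2)⁻¹ ≠ 1 := by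
        intro h
        have : (1 + x)^2 = 1 := by
          field_simp at h; nlinarith
        nlinarith
      have hpos : (0:ℝ) < ((1 + x)^2)⁻¹ := by positivity
      have hlog := Real.log_lt_sub_one_of_pos hpos hne
      rw [Real.log_inv, Real.log_pow] at hlog
      -- hlog : -(2 * log (1+x)) < ((1+x)^2)⁻¹ - 1
      have hinv : ((1 + x)^2)⁻¹ * (1 + x)^2 = 1 := by
        field_simp
      have hsq : (0:ℝ) < (1 + x)^2 := by positivity
      have hlog2 : x * (x + 2) < 2 * (1 + x)^2 * Real.log (1 + x) := by
        nlinarith [mul_lt_mul_of_pos_right hlog hsq, hinv]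
      have h1 : (1 / (1 + x)) * (1 + x) = 1 := by field_simp
      nlinarith [hlog2, h1, h1x, mul_lt_mul_of_pos_right hlog2 h1x]
    · positivity
  exact strictAntiOn_of_deriv_neg (convex_Ioi 0)
    (by
      apply ContinuousOn.div
      · exact (Real.continuousOn_log.comp (by fun_prop)
          (fun y hy => by simp only [Set.mem_Ioi] at hy; intro h; simp at h; linarith))
      · fun_prop
      · intro y hy
        simp only [Set.mem_Ioi] at hy
        positivity)
    hderiv
end

section
/- Let n be a nonempty finite type, let G be an n × n complex positive definite matrix, and let d : n → ℂ with d ≠ 0. Then the vector x★ = G⁻¹·d is nonzero and achieves equality in the generalized Cauchy–Schwarz bound: |x★* ⬝ d|² = Re(x★* ⬝ (G·x★)) · Re(d* ⬝ (G⁻¹·d)). Consequently, Re(d* ⬝ (G⁻¹·d)) is the maximum over all nonzero x : n → ℂ of the generalized Rayleigh quotient |x* ⬝ d|² / Re(x* ⬝ (G·x)). -/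
open Matrix
open scoped ComplexOrder

/-- Attainment part of Theorem 6: for positive definite `G` and `d ≠ 0`, the vector
`x★ = G⁻¹ d` is nonzero, achieves equality in the generalized Cauchy–Schwarz bound,
and `Re(d* ⬝ G⁻¹ d)` is the maximum of the generalized Rayleigh quotient
`|x* ⬝ d|² / Re(x* ⬝ (G x))` over all nonzero `x`. -/
theorem stmt_10 {n : Type*} [Fintype n] [DecidableEq n] [Nonempty n]
    (G : Matrix n n ℂ) (hG : G.PosDef) (d : n → ℂ) (hd : d ≠ 0) :
    G⁻¹ *ᵥ d ≠ 0 ∧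
    ‖star (G⁻¹ *ᵥ d) ⬝ᵥ d‖ ^ 2
      = (star (G⁻¹ *ᵥ d) ⬝ᵥ (G *ᵥ (G⁻¹ *ᵥ d))).re * (star d ⬝ᵥ (G⁻¹ *ᵥ d)).re ∧
    IsGreatest {q : ℝ | ∃ x : n → ℂ, x ≠ 0 ∧
        q = ‖star x ⬝ᵥ d‖ ^ 2 / (star x ⬝ᵥ (G *ᵥ x)).re}
      ((star d ⬝ᵥ (G⁻¹ *ᵥ d)).re) := by
  have hGinv : (G⁻¹).PosDef := hG.inv
  set y := G⁻¹ *ᵥ d with hy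
  have hGy : G *ᵥ y = d := by
    rw [hy, mulVec_mulVec, mul_nonsing_inv _ (isUnit_iff_isUnit_det _ |>.1 hG.isUnit), one_mulVec]
  have hyne : y ≠ 0 := by
    intro h
    exact hd (by rw [← hGy, h, mulVec_zero])
  have hr : 0 < (star d ⬝ᵥ y).re := hGinv.re_dotProduct_pos hd
  have hself : star y ⬝ᵥ d = star d ⬝ᵥ y := by
    conv_lhs => rw [hy, star_mulVec, hGinv.isHermitian.eq]
    rw [← dotProduct_mulVec, ← hy]
  have hstar : star (star d ⬝ᵥ y) = star d ⬝ᵥ y := by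
    rw [← star_dotProduct, hself]
  have him : (star d ⬝ᵥ y).im = 0 := by
    have := congrArg Complex.im hstar
    simp [Complex.star_def] at this
    linarith
  have hval : star y ⬝ᵥ d = ((star d ⬝ᵥ y).re : ℂ) := by
    rw [hself]; exact Complex.ext (by simp) (by simp [him])
  refine ⟨hyne, ?_, ?_, ?_⟩
  · rw [hGy, hval, Complex.norm_real, Real.norm_eq_abs, abs_of_pos hr, Complex.ofReal_re, sq]
  · refine ⟨y, hyne, ?_⟩
    rw [hGy, hval, Complex.norm_real, Real.norm_eq_abs, abs_of_pos hr, Complex.ofReal_re, sq]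
    field_simp
  · rintro q ⟨x, hx, rfl⟩
    have hcs : ‖star x ⬝ᵥ (G *ᵥ y)‖ * ‖star y ⬝ᵥ (G *ᵥ x)‖
        ≤ (star x ⬝ᵥ (G *ᵥ x)).re * (star y ⬝ᵥ (G *ᵥ y)).re := by
      have h := @inner_mul_inner_self_le ℂ (n → ℂ) _
        (G.toSeminormedAddCommGroup hG.posSemidef)
        (G.toInnerProductSpace hG.posSemidef) x y
      change ‖(G *ᵥ y) ⬝ᵥ star x‖ * ‖(G *ᵥ x) ⬝ᵥ star y‖
        ≤ ((G *ᵥ x) ⬝ᵥ star x).re * ((G *ᵥ y) ⬝ᵥ star y).re at h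
      rwa [dotProduct_comm (G *ᵥ y) (star x), dotProduct_comm (G *ᵥ x) (star y),
        dotProduct_comm (G *ᵥ x) (star x), dotProduct_comm (G *ᵥ y) (star y)] at h
    have hswap : star y ⬝ᵥ (G *ᵥ x) = star (star x ⬝ᵥ (G *ᵥ y)) := by
      rw [star_dotProduct, star_mulVec, hG.isHermitian.eq, ← dotProduct_mulVec]
    rw [hswap, norm_star, hGy, hval, Complex.ofReal_re] at hcs
    have hxpos : 0 < (star x ⬝ᵥ (G *ᵥ x)).re := hG.re_dotProduct_pos hx
    rw [div_le_iff₀ hxpos]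
    calc ‖star x ⬝ᵥ d‖ ^ 2 = ‖star x ⬝ᵥ d‖ * ‖star x ⬝ᵥ d‖ := sq _
      _ ≤ (star x ⬝ᵥ (G *ᵥ x)).re * (star d ⬝ᵥ y).re := hcs
      _ = (star d ⬝ᵥ y).re * (star x ⬝ᵥ (G *ᵥ x)).re := mul_comm _ _
end

section
/- Let n be a nonempty finite type, let G be an n × n complex positive definite matrix, and let d : n → ℂ be such that G − d·d* is positive definite (d·d* being the outer product). Set τ = Re(d* ⬝ (G⁻¹·d)), so 0 ≤ τ < 1. Then for every nonzero x : n → ℂ, |x* ⬝ d|² / Re(x* ⬝ ((G − d·d*)·x)) ≤ τ / (1 − τ), and equality holds for x = G⁻¹·d when d ≠ 0. -/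
open Matrix
open scoped ComplexOrder

private lemma cs_aux {n : Type*} [Fintype n] (G : Matrix n n ℂ) (hG : G.PosDef)
    (x y : n → ℂ) :
    ‖star x ⬝ᵥ (G *ᵥ y)‖ ^ 2 ≤ (star x ⬝ᵥ G *ᵥ x).re * (star y ⬝ᵥ G *ᵥ y).re := by
  letI ci : Inner ℂ (n → ℂ) := ⟨fun a b => star a ⬝ᵥ (G *ᵥ b)⟩
  letI c : PreInnerProductSpace.Core ℂ (n → ℂ) :=
    { toInner := ci
      conj_inner_symm := fun a b => by
        show (starRingEnd ℂ) (star b ⬝ᵥ (G *ᵥ a)) = star a ⬝ᵥ (G *ᵥ b)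
        rw [starRingEnd_apply, ← star_dotProduct, star_mulVec, hG.isHermitian.eq,
          ← dotProduct_mulVec]
      re_inner_nonneg := fun a => by
        show 0 ≤ RCLike.re (star a ⬝ᵥ (G *ᵥ a))
        by_cases h : a = 0
        · simp [h]
        · exact (hG.re_dotProduct_pos h).le
      add_left := fun a b z => by
        show star (a + b) ⬝ᵥ (G *ᵥ z) = star a ⬝ᵥ (G *ᵥ z) + star b ⬝ᵥ (G *ᵥ z)
        rw [star_add, add_dotProduct]
      smul_left := fun a b r => by
        show star (r • a) ⬝ᵥ (G *ᵥ b) = (starRingEnd ℂ) r * (star a ⬝ᵥ (G *ᵥ b))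
        rw [star_smul, smul_dotProduct, smul_eq_mul, starRingEnd_apply] }
  have h := InnerProductSpace.Core.inner_mul_inner_self_le (𝕜 := ℂ) (F := n → ℂ) x y
  have hc : (starRingEnd ℂ) (star y ⬝ᵥ (G *ᵥ x)) = star x ⬝ᵥ (G *ᵥ y) := c.conj_inner_symm x y
  have hsym : ‖star y ⬝ᵥ (G *ᵥ x)‖ = ‖star x ⬝ᵥ (G *ᵥ y)‖ := by
    rw [← hc, RCLike.norm_conj]
  have h' : ‖star x ⬝ᵥ (G *ᵥ y)‖ * ‖star y ⬝ᵥ (G *ᵥ x)‖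
      ≤ RCLike.re (star x ⬝ᵥ (G *ᵥ x)) * RCLike.re (star y ⬝ᵥ (G *ᵥ y)) := h
  rw [hsym, ← sq] at h'
  exact h'

/-- Theorem 6 of the paper: with `G` and `G - d d*` positive definite and
`τ = Re(d* ⬝ G⁻¹ d)` (so `0 ≤ τ < 1`), the SINR `|x* ⬝ d|² / Re(x* ⬝ ((G - d d*) x))`
of every nonzero detector `x` is at most `τ / (1 - τ)`, with equality attained at the
optimal detector `x = G⁻¹ d` when `d ≠ 0`. -/
theorem stmt_12 {n : Type*} [Fintype n] [DecidableEq n] [Nonempty n]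
    (G : Matrix n n ℂ) (hG : G.PosDef) (d : n → ℂ)
    (hGd : (G - vecMulVec d (star d)).PosDef)
    (τ : ℝ) (hτ : τ = (star d ⬝ᵥ (G⁻¹ *ᵥ d)).re) :
    (0 ≤ τ ∧ τ < 1) ∧
    (∀ x : n → ℂ, x ≠ 0 →
      ‖star x ⬝ᵥ d‖ ^ 2 / (star x ⬝ᵥ ((G - vecMulVec d (star d)) *ᵥ x)).re
        ≤ τ / (1 - τ)) ∧
    (d ≠ 0 →
      ‖star (G⁻¹ *ᵥ d) ⬝ᵥ d‖ ^ 2 /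
          (star (G⁻¹ *ᵥ d) ⬝ᵥ ((G - vecMulVec d (star d)) *ᵥ (G⁻¹ *ᵥ d))).re
        = τ / (1 - τ)) := by
  set e : n → ℂ := G⁻¹ *ᵥ d with he
  have hGe : G *ᵥ e = d := by
    rw [he, mulVec_mulVec, Matrix.mul_nonsing_inv G (isUnit_iff_isUnit_det G |>.1 hG.isUnit),
      one_mulVec]
  -- τ as a complex value
  have hconj : (starRingEnd ℂ) (star d ⬝ᵥ (G⁻¹ *ᵥ d)) = star d ⬝ᵥ (G⁻¹ *ᵥ d) := by
    rw [starRingEnd_apply, ← star_dotProduct, star_mulVec, hG.isHermitian.inv.eq,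
      ← dotProduct_mulVec]
  have htC : star d ⬝ᵥ e = (τ : ℂ) := by
    have him : (star d ⬝ᵥ (G⁻¹ *ᵥ d)).im = 0 := Complex.conj_eq_iff_im.mp hconj
    rw [he]
    exact Complex.ext (by rw [hτ]; simp [he]) (by simpa using him)
  -- star e ⬝ᵥ d = τ
  have hed : star e ⬝ᵥ d = (τ : ℂ) := by
    rw [star_dotProduct, htC]
    exact Complex.conj_ofReal τ
  -- denominator decomposition
  have hvmv : ∀ x : n → ℂ, vecMulVec d (star d) *ᵥ x = (star d ⬝ᵥ x) • d := by
    intro x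
    funext i
    simp only [mulVec, dotProduct, vecMulVec_apply, Pi.smul_apply, smul_eq_mul,
      Finset.sum_mul]
    exact Finset.sum_congr rfl fun j _ => by ring
  have hre : ∀ x : n → ℂ,
      (star x ⬝ᵥ ((G - vecMulVec d (star d)) *ᵥ x)).re
        = (star x ⬝ᵥ (G *ᵥ x)).re - ‖star x ⬝ᵥ d‖ ^ 2 := by
    intro x
    rw [sub_mulVec, dotProduct_sub, hvmv, dotProduct_smul]
    have hcc : star d ⬝ᵥ x = star (star x ⬝ᵥ d) := star_dotProduct d x
    rw [hcc, smul_eq_mul]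
    have : star (star x ⬝ᵥ d) * (star x ⬝ᵥ d) = ((‖star x ⬝ᵥ d‖ ^ 2 : ℝ) : ℂ) := by
      rw [← starRingEnd_apply, RCLike.conj_mul]
      norm_cast
    rw [this, Complex.sub_re, Complex.ofReal_re]
  -- basic positivity
  have hτ0 : 0 ≤ τ := by
    rw [hτ]
    have := hG.inv.posSemidef.re_dotProduct_nonneg d
    simpa using this
  -- Cauchy-Schwarz: ‖x* d‖² ≤ (x* G x).re * τ
  have hCS : ∀ x : n → ℂ, ‖star x ⬝ᵥ d‖ ^ 2 ≤ (star x ⬝ᵥ G *ᵥ x).re * τ := by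
    intro x
    have h := cs_aux G hG x e
    rw [hGe, hed] at h
    simpa using h
  -- τ < 1
  have hτ1 : τ < 1 := by
    by_cases hd : d = 0
    · have : τ = 0 := by rw [hτ, hd]; simp
      simp [this]
    · have he0 : e ≠ 0 := fun h => hd (by rw [← hGe, h, mulVec_zero])
      have hpos := hGd.re_dotProduct_pos he0
      rw [RCLike.re_to_complex, hre e] at hpos
      have h1 : (star e ⬝ᵥ (G *ᵥ e)).re = τ := by rw [hGe, hed]; simp
      have h2 : ‖star e ⬝ᵥ d‖ ^ 2 = τ ^ 2 := by
        rw [hed, Complex.norm_real, Real.norm_eq_abs, abs_of_nonneg hτ0]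
      rw [h1, h2] at hpos
      nlinarith
  refine ⟨⟨hτ0, hτ1⟩, fun x hx => ?_, fun hd => ?_⟩
  · -- main inequality
    have hpos := hGd.re_dotProduct_pos hx
    rw [RCLike.re_to_complex] at hpos
    have hden := hre x
    set A := (star x ⬝ᵥ (G *ᵥ x)).re
    set B := ‖star x ⬝ᵥ d‖ ^ 2 with hB
    have hB0 : 0 ≤ B := by positivity
    have hcs := hCS x
    rw [hden] at hpos ⊢
    rw [div_le_div_iff₀ hpos (by linarith)]
    nlinarith
  · -- equality at the optimal detector
    have he0 : e ≠ 0 := fun h => hd (by rw [← hGe, h, mulVec_zero])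
    have hpos := hGd.re_dotProduct_pos he0
    rw [RCLike.re_to_complex, hre e] at hpos
    have h1 : (star e ⬝ᵥ (G *ᵥ e)).re = τ := by rw [hGe, hed]; simp
    have h2 : ‖star e ⬝ᵥ d‖ ^ 2 = τ ^ 2 := by
      rw [hed, Complex.norm_real, Real.norm_eq_abs, abs_of_nonneg hτ0]
    rw [h1, h2] at hpos
    rw [hre e, h1, h2]
    rw [div_eq_div_iff (by nlinarith) (by linarith)]
    ring
end
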